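/- Every reconfiguration sequence from p_b to p_e in G_φ has length at least 2m(n+2). Moreover, in any reconfiguration sequence from p_b to p_e of length exactly 2m(n+2), every move—replacing a vertex b of the current path by a vertex c—satisfies l(c) − l(b) ∈ {0,1}, cs(c) − cs(b) ∈ {0,1} and (l(c) + cs(c)) − (l(b) + cs(b)) = 1, where l and cs denote the level and the c-state of a vertex; i.e., each move increases either the level or the c-state of the switched vertex, but not both. -/

import Mathlib

/-- Vertices of the graph `G_φ` (for a CNF formula with `n` variables and `m` clauses):
`s`, `t`, the vertices `beg_{j+1}` and `end_{j+1}` (for `j : Fin (2m)`), and the gadget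
vertices `v(i+1, vs, cs, j+1)` (for `i : Fin n`, `vs cs : Bool`, `j : Fin (2m)`).
An index `i : Fin n` encodes level `i+1`, and `j : Fin (2m)` encodes depth `j+1`. -/
inductive PVert (n m : ℕ) : Type where
  | s : PVert n m
  | t : PVert n m
  | beg (j : Fin (2 * m)) : PVert n m
  | en (j : Fin (2 * m)) : PVert n m
  | v (i : Fin n) (vs : Bool) (cs : Bool) (j : Fin (2 * m)) : PVert n m
deriving DecidableEq

/-- The depth of a vertex of `G_φ`. -/
def PVert.depth {n m : ℕ} : PVert n m → ℕ
  | PVert.s => 0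
  | PVert.t => 2 * m + 1
  | PVert.beg j => (j : ℕ) + 1
  | PVert.en j => (j : ℕ) + 1
  | PVert.v _ _ _ j => (j : ℕ) + 1

/-- The level of a vertex of `G_φ` (`beg`-vertices have level `0`, `end`-vertices have
level `n+1`, the gadget vertex `v(i,vs,cs,j)` has level `i`; junk value `0` for `s`,`t`). -/
def PVert.level {n m : ℕ} : PVert n m → ℕ
  | PVert.beg _ => 0
  | PVert.en _ => n + 1
  | PVert.v i _ _ _ => (i : ℕ) + 1
  | _ => 0

/-- The c-state of a vertex of `G_φ` (`beg`-vertices have c-state `0`, `end`-vertices have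
c-state `1`, the gadget vertex `v(i,vs,cs,j)` has c-state `cs`; junk value `0` for `s`,`t`). -/
def PVert.cstate {n m : ℕ} : PVert n m → ℕ
  | PVert.beg _ => 0
  | PVert.en _ => 1
  | PVert.v _ _ cs _ => cond cs 1 0
  | _ => 0

/-- The (directed) edges of `G_φ`.  The CNF formula `φ` is recorded by its clauses:
`(i, vs) ∈ φ jc` means that clause `C_{jc+1}` contains the literal asserting `x_{i+1} = vs`,
i.e. that setting `x_{i+1} = vs` satisfies clause `C_{jc+1}`. -/
def PEdge (n m : ℕ) (φ : Fin m → Finset (Fin n × Bool)) (a b : PVert n m) : Prop :=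
  -- (a) gadget edges, same c-state: from depth j to depth j+1 inside a gadget
  (∃ (i : Fin n) (vs cs : Bool) (j j' : Fin (2 * m)), (j' : ℕ) = (j : ℕ) + 1 ∧
      a = PVert.v i vs cs j ∧ b = PVert.v i vs cs j') ∨
  -- (a) gadget edges, crossing: from even depth 2j to odd depth 2j+1, flipping the c-state
  (∃ (i : Fin n) (vs cs : Bool) (j j' : Fin (2 * m)), (j' : ℕ) = (j : ℕ) + 1 ∧
      (j : ℕ) % 2 = 1 ∧ a = PVert.v i vs cs j ∧ b = PVert.v i vs (!cs) j') ∨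
  -- (b) formula edges: from v(i,vs,1,2jc-1) to v(i,vs,0,2jc) when x_i = vs satisfies C_jc
  (∃ (i : Fin n) (vs : Bool) (j j' : Fin (2 * m)) (jc : Fin m), (j' : ℕ) = (j : ℕ) + 1 ∧
      (j : ℕ) = 2 * (jc : ℕ) ∧ (i, vs) ∈ φ jc ∧
      a = PVert.v i vs true j ∧ b = PVert.v i vs false j') ∨
  -- (c) inter-level edges, same c-state: from level i+1, depth j-1 to level i, depth j
  (∃ (ihi ilo : Fin n) (vs' vs cs : Bool) (j j' : Fin (2 * m)), (ihi : ℕ) = (ilo : ℕ) + 1 ∧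
      (j' : ℕ) = (j : ℕ) + 1 ∧ a = PVert.v ihi vs' cs j ∧ b = PVert.v ilo vs cs j') ∨
  -- (c) inter-level edges, crossing: from level i+1, even depth 2j to level i, depth 2j+1
  (∃ (ihi ilo : Fin n) (vs' vs cs : Bool) (j j' : Fin (2 * m)), (ihi : ℕ) = (ilo : ℕ) + 1 ∧
      (j' : ℕ) = (j : ℕ) + 1 ∧ (j : ℕ) % 2 = 1 ∧
      a = PVert.v ihi vs' cs j ∧ b = PVert.v ilo vs (!cs) j') ∨
  -- (d) the begin path
  (∃ (j j' : Fin (2 * m)), (j' : ℕ) = (j : ℕ) + 1 ∧ a = PVert.beg j ∧ b = PVert.beg j') ∨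
  -- (d) the end path
  (∃ (j j' : Fin (2 * m)), (j' : ℕ) = (j : ℕ) + 1 ∧ a = PVert.en j ∧ b = PVert.en j') ∨
  -- (d) from v(1,vs,0,j) to beg_{j+1}
  (∃ (i : Fin n) (vs : Bool) (j j' : Fin (2 * m)), (i : ℕ) = 0 ∧ (j' : ℕ) = (j : ℕ) + 1 ∧
      a = PVert.v i vs false j ∧ b = PVert.beg j') ∨
  -- (d) from end_j to v(n,vs,1,j+1)
  (∃ (i : Fin n) (vs : Bool) (j j' : Fin (2 * m)), (i : ℕ) + 1 = n ∧ (j' : ℕ) = (j : ℕ) + 1 ∧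
      a = PVert.en j ∧ b = PVert.v i vs true j') ∨
  -- edges from s to every vertex of depth 1
  (a = PVert.s ∧ b.depth = 1) ∨
  -- edges from every vertex of depth 2m to t
  (a.depth = 2 * m ∧ b = PVert.t)

/-- A shortest `(s,t)`-path in `G_φ`: a directed path from `s` to `t` with `2m+2` vertices,
one vertex of each depth `0, 1, …, 2m+1`. -/
def IsStPath (n m : ℕ) (φ : Fin m → Finset (Fin n × Bool))
    (p : Fin (2 * m + 1 + 1) → PVert n m) : Prop :=
  p 0 = PVert.s ∧ p (Fin.last (2 * m + 1)) = PVert.t ∧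
    (∀ i : Fin (2 * m + 1), PEdge n m φ (p i.castSucc) (p i.succ)) ∧
    (∀ d : Fin (2 * m + 1 + 1), (p d).depth = (d : ℕ))

/-- Two vertex sequences differ in exactly one position. -/
def DiffOne {N : ℕ} {α : Type*} (p q : Fin N → α) : Prop :=
  ∃ i, p i ≠ q i ∧ ∀ j, j ≠ i → p j = q j

/-- `ρ 0, ρ 1, …, ρ ℓ` is a reconfiguration sequence of length `ℓ` from the shortest
`(s,t)`-path `p` to the shortest `(s,t)`-path `q` in `G_φ`. -/
def PReconfSeq (n m : ℕ) (φ : Fin m → Finset (Fin n × Bool))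
    (ρ : ℕ → (Fin (2 * m + 1 + 1) → PVert n m)) (ℓ : ℕ)
    (p q : Fin (2 * m + 1 + 1) → PVert n m) : Prop :=
  ρ 0 = p ∧ ρ ℓ = q ∧ (∀ i ≤ ℓ, IsStPath n m φ (ρ i)) ∧
    ∀ i < ℓ, DiffOne (ρ i) (ρ (i + 1))

/-- The path `p_b = (s, beg_1, …, beg_{2m}, t)`. -/
def pbP (n m : ℕ) : Fin (2 * m + 1 + 1) → PVert n m := fun d =>
  if h0 : (d : ℕ) = 0 then PVert.s
  else if h1 : (d : ℕ) ≤ 2 * m then PVert.beg ⟨(d : ℕ) - 1, by omega⟩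
  else PVert.t

/-- The path `p_e = (s, end_1, …, end_{2m}, t)`. -/
def peP (n m : ℕ) : Fin (2 * m + 1 + 1) → PVert n m := fun d =>
  if h0 : (d : ℕ) = 0 then PVert.s
  else if h1 : (d : ℕ) ≤ 2 * m then PVert.en ⟨(d : ℕ) - 1, by omega⟩
  else PVert.t


namespace Stmt3Aux

variable {n m : ℕ} {φ : Fin m → Finset (Fin n × Bool)} {a b c e : PVert n m}

lemma cstate_le_one (v : PVert n m) : v.cstate ≤ 1 := by
  rcases v with _ | _ | j | j | ⟨i, vs, cs, j⟩ <;> simp [PVert.cstate]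
  cases cs <;> simp

lemma edge_level (hab : PEdge n m φ a b) (ha : a ≠ PVert.s) (hb : b ≠ PVert.t) :
    b.level = a.level ∨ b.level + 1 = a.level := by
  rcases hab with ⟨i,vs,cs,j,j',h1,rfl,rfl⟩ | ⟨i,vs,cs,j,j',h1,h2,rfl,rfl⟩ |
    ⟨i,vs,j,j',jc,h1,h2,h3,rfl,rfl⟩ | ⟨ihi,ilo,vs',vs,cs,j,j',h1,h2,rfl,rfl⟩ |
    ⟨ihi,ilo,vs',vs,cs,j,j',h1,h2,h3,rfl,rfl⟩ | ⟨j,j',h1,rfl,rfl⟩ | ⟨j,j',h1,rfl,rfl⟩ |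
    ⟨i,vs,j,j',h1,h2,rfl,rfl⟩ | ⟨i,vs,j,j',h1,h2,rfl,rfl⟩ | ⟨rfl,h1⟩ | ⟨h1,rfl⟩
  · left; rfl
  · left; rfl
  · left; rfl
  · right; simp [PVert.level]; omega
  · right; simp [PVert.level]; omega
  · left; rfl
  · left; rfl
  · right; simp [PVert.level]; omega
  · right; simp [PVert.level]; omega
  · exact absurd rfl ha
  · exact absurd rfl hb

lemma edge_cs_up (hab : PEdge n m φ a b) (h : a.cstate < b.cstate) :
    b.depth % 2 = 1 := by
  rcases hab with ⟨i,vs,cs,j,j',h1,rfl,rfl⟩ | ⟨i,vs,cs,j,j',h1,h2,rfl,rfl⟩ |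
    ⟨i,vs,j,j',jc,h1,h2,h3,rfl,rfl⟩ | ⟨ihi,ilo,vs',vs,cs,j,j',h1,h2,rfl,rfl⟩ |
    ⟨ihi,ilo,vs',vs,cs,j,j',h1,h2,h3,rfl,rfl⟩ | ⟨j,j',h1,rfl,rfl⟩ | ⟨j,j',h1,rfl,rfl⟩ |
    ⟨i,vs,j,j',h1,h2,rfl,rfl⟩ | ⟨i,vs,j,j',h1,h2,rfl,rfl⟩ | ⟨rfl,h1⟩ | ⟨h1,rfl⟩
  · exact absurd h (lt_irrefl _)
  · simp [PVert.depth]; omega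
  · simp [PVert.cstate] at h
  · exact absurd h (lt_irrefl _)
  · simp [PVert.depth]; omega
  · exact absurd h (lt_irrefl _)
  · exact absurd h (lt_irrefl _)
  · simp [PVert.cstate] at h
  · simp [PVert.cstate] at h
  · omega
  · simp [PVert.cstate] at h

lemma edge_drop_cs (hab : PEdge n m φ a b) (h1 : b.level < a.level)
    (h2 : a.cstate ≠ b.cstate) : b.depth % 2 = 1 := by
  rcases hab with ⟨i,vs,cs,j,j',h1',rfl,rfl⟩ | ⟨i,vs,cs,j,j',h1',h2',rfl,rfl⟩ |
    ⟨i,vs,j,j',jc,h1',h2',h3',rfl,rfl⟩ | ⟨ihi,ilo,vs',vs,cs,j,j',h1',h2',rfl,rfl⟩ |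
    ⟨ihi,ilo,vs',vs,cs,j,j',h1',h2',h3',rfl,rfl⟩ | ⟨j,j',h1',rfl,rfl⟩ | ⟨j,j',h1',rfl,rfl⟩ |
    ⟨i,vs,j,j',h1',h2',rfl,rfl⟩ | ⟨i,vs,j,j',h1',h2',rfl,rfl⟩ | ⟨rfl,h1'⟩ | ⟨h1',rfl⟩
  · simp [PVert.level] at h1
  · simp [PVert.level] at h1
  · simp [PVert.level] at h1
  · simp [PVert.cstate] at h2
  · simp [PVert.depth]; omega
  · simp [PVert.level] at h1
  · simp [PVert.level] at h1
  · simp [PVert.cstate] at h2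
  · simp [PVert.cstate] at h2
  · simp [PVert.level] at h1
  · simp [PVert.depth]



lemma excl
    (hab : PEdge n m φ a b) (hac : PEdge n m φ a c)
    (hbe : PEdge n m φ b e) (hce : PEdge n m φ c e)
    (hbt : b ≠ PVert.t) (hct : c ≠ PVert.t) (hbs : b ≠ PVert.s) (hcs : c ≠ PVert.s)
    (has : b.depth % 2 = 0 → a ≠ PVert.s)
    (het : b.depth % 2 = 1 → e ≠ PVert.t)
    (hcd : c.depth = b.depth) (hed : e.depth = b.depth + 1)
    (hlc : c.level = b.level + 1) (hcb : b.cstate = 0) (hcc : c.cstate = 1) :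
    False := by
  rcases Nat.mod_two_eq_zero_or_one b.depth with hpar | hpar
  · have haS := has hpar
    have h1 := edge_level hab haS hbt
    have h2 := edge_level hac haS hct
    have hacs := cstate_le_one a
    rcases Nat.lt_or_ge a.cstate 1 with h | h
    · have hodd := edge_cs_up hac (by omega)
      omega
    · have hodd := edge_drop_cs hab (by omega) (by omega)
      omega
  · have heT := het hpar
    have h1 := edge_level hbe hbs heT
    have h2 := edge_level hce hcs heT
    have hecs := cstate_le_one e
    rcases Nat.lt_or_ge e.cstate 1 with h | h
    · have hodd := edge_drop_cs hce (by omega) (by omega)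
      omega
    · have hodd := edge_cs_up hbe (by omega)
      omega

lemma move_lemma (hm : 1 ≤ m)
    (p q : Fin (2 * m + 1 + 1) → PVert n m)
    (hp : IsStPath n m φ p) (hq : IsStPath n m φ q)
    (pos : Fin (2 * m + 1 + 1)) (hne : p pos ≠ q pos)
    (hagree : ∀ j, j ≠ pos → p j = q j) :
    ((q pos).level = (p pos).level ∨ (q pos).level = (p pos).level + 1 ∨
      (q pos).level + 1 = (p pos).level) ∧
    (q pos).level + (q pos).cstate ≤ (p pos).level + (p pos).cstate + 1 ∧
    (p pos).level + (p pos).cstate ≤ (q pos).level + (q pos).cstate + 1 := by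
  obtain ⟨hp0, hpL, hpe, hpd⟩ := hp
  obtain ⟨hq0, hqL, hqe, hqd⟩ := hq
  have hpos0 : pos ≠ 0 := by rintro rfl; rw [hp0, hq0] at hne; exact hne rfl
  have hposL : pos ≠ Fin.last (2 * m + 1) := by
    rintro rfl; rw [hpL, hqL] at hne; exact hne rfl
  obtain ⟨i, rfl⟩ := Fin.eq_succ_of_ne_zero hpos0
  obtain ⟨i', hi'⟩ := Fin.eq_castSucc_of_ne_last hposL
  -- agreement at neighbors
  have hane : i.castSucc ≠ i.succ := by
    intro h; have := congrArg Fin.val h; simp [Fin.val_succ] at this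
  have hene : i'.succ ≠ i.succ := by
    intro h; have := congrArg Fin.val h
    have h2 := congrArg Fin.val hi'
    simp [Fin.val_succ] at this h2; omega
  have ha : q i.castSucc = p i.castSucc := (hagree _ hane).symm
  have he : q i'.succ = p i'.succ := (hagree _ hene).symm
  have hab : PEdge n m φ (p i.castSucc) (p i.succ) := hpe i
  have hac : PEdge n m φ (p i.castSucc) (q i.succ) := by
    have := hqe i; rwa [ha] at this
  have hbe : PEdge n m φ (p i.succ) (p i'.succ) := by
    have := hpe i'; rwa [hi'] at this
  have hce : PEdge n m φ (q i.succ) (p i'.succ) := by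
    have := hqe i'; rwa [hi', he] at this
  set a := p i.castSucc with hadef
  set b := p i.succ with hbdef
  set c := q i.succ with hcdef
  set e := p i'.succ with hedef
  have hDb : b.depth = (i : ℕ) + 1 := by rw [hbdef, hpd]; simp
  have hDc : c.depth = (i : ℕ) + 1 := by rw [hcdef, hqd]; simp
  have hDa : a.depth = (i : ℕ) := by rw [hadef, hpd]; simp
  have hDe : e.depth = (i : ℕ) + 2 := by
    rw [hedef, hpd]
    have h2 := congrArg Fin.val hi'
    simp [Fin.val_succ] at h2 ⊢; omega
  have hD2m : (i : ℕ) + 1 ≤ 2 * m := by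
    have h2 := congrArg Fin.val hi'
    have := i'.isLt
    simp [Fin.val_succ] at h2; omega
  have hbt : b ≠ PVert.t := by
    intro h; rw [h] at hDb; simp [PVert.depth] at hDb; omega
  have hct : c ≠ PVert.t := by
    intro h; rw [h] at hDc; simp [PVert.depth] at hDc; omega
  have hbs : b ≠ PVert.s := by
    intro h; rw [h] at hDb; simp [PVert.depth] at hDb
  have hcs : c ≠ PVert.s := by
    intro h; rw [h] at hDc; simp [PVert.depth] at hDc
  have has : b.depth % 2 = 0 → a ≠ PVert.s := by
    intro hpar h; rw [h] at hDa; simp [PVert.depth] at hDa; omega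
  have het : b.depth % 2 = 1 → e ≠ PVert.t := by
    intro hpar h; rw [h] at hDe; simp [PVert.depth] at hDe; omega
  have hcsb := cstate_le_one b
  have hcsc := cstate_le_one c
  have hA : c.level = b.level ∨ c.level = b.level + 1 ∨ c.level + 1 = b.level := by
    rcases Nat.eq_zero_or_pos (i : ℕ) with hi0 | hi0
    · -- a = s possible; use e-side. e ≠ t since depth = 2 ≤ 2m < 2m+1
      have heT : e ≠ PVert.t := by
        intro h; rw [h] at hDe; simp [PVert.depth] at hDe; omega
      have h1 := edge_level hbe hbs heT
      have h2 := edge_level hce hcs heT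
      omega
    · have haS : a ≠ PVert.s := by
        intro h; rw [h] at hDa; simp [PVert.depth] at hDa; omega
      have h1 := edge_level hab haS hbt
      have h2 := edge_level hac haS hct
      omega
  refine ⟨hA, ?_, ?_⟩
  · by_contra hcon
    exact excl hab hac hbe hce hbt hct hbs hcs has het (by omega) (by omega)
      (by omega) (by omega) (by omega)
  · by_contra hcon
    exact excl hac hab hce hbe hct hbt hcs hbs
      (by intro hh; exact has (by omega) ) (by intro hh; exact het (by omega))
      (by omega) (by omega) (by omega) (by omega) (by omega)


def fval (v : PVert n m) : ℕ := v.level + v.cstate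

def Phi (p : Fin (2 * m + 1 + 1) → PVert n m) : ℕ := ∑ d, fval (p d)

lemma phi_exchange (p q : Fin (2 * m + 1 + 1) → PVert n m) (pos : Fin (2 * m + 1 + 1))
    (hagree : ∀ j, j ≠ pos → p j = q j) :
    Phi p + fval (q pos) = Phi q + fval (p pos) := by
  unfold Phi
  rw [← Finset.sum_erase_add _ _ (Finset.mem_univ pos),
      ← Finset.sum_erase_add _ (fun d => fval (q d)) (Finset.mem_univ pos)]
  have heq : ∑ x ∈ Finset.univ.erase pos, fval (p x)
      = ∑ x ∈ Finset.univ.erase pos, fval (q x) :=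
    Finset.sum_congr rfl fun x hx => by rw [hagree x (Finset.ne_of_mem_erase hx)]
  omega
lemma phi_pbP : Phi (pbP n m) = 0 := by
  unfold Phi
  refine Finset.sum_eq_zero fun d _ => ?_
  simp only [pbP]; split_ifs <;> rfl

lemma phi_peP : Phi (peP n m) = 2 * m * (n + 2) := by
  unfold Phi
  have hval : ∀ d : Fin (2 * m + 1 + 1),
      fval (peP n m d) = if (d : ℕ) = 0 ∨ (d : ℕ) = 2 * m + 1 then 0 else n + 2 := by
    intro d
    have hlt := d.isLt
    by_cases h0 : (d : ℕ) = 0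
    · rw [if_pos (Or.inl h0)]; simp only [peP, dif_pos h0]; rfl
    · by_cases h1 : (d : ℕ) ≤ 2 * m
      · rw [if_neg (by omega)]; simp only [peP, dif_neg h0, dif_pos h1]; rfl
      · rw [if_pos (Or.inr (by omega))]; simp only [peP, dif_neg h0, dif_neg h1]; rfl
  rw [Finset.sum_congr rfl fun d _ => hval d]
  rw [Fin.sum_univ_eq_sum_range (fun k => if k = 0 ∨ k = 2 * m + 1 then 0 else n + 2)]
  rw [Finset.range_eq_Ico,
    ← Finset.sum_Ico_consecutive _ (by omega : (0:ℕ) ≤ 1) (by omega : (1:ℕ) ≤ 2 * m + 1 + 1),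
    ← Finset.sum_Ico_consecutive _ (by omega : (1:ℕ) ≤ 2 * m + 1) (by omega : 2 * m + 1 ≤ 2 * m + 1 + 1)]
  have hA : ∑ k ∈ Finset.Ico 0 1, (if k = 0 ∨ k = 2 * m + 1 then 0 else n + 2) = 0 := by
    simp
  have hC : ∑ k ∈ Finset.Ico (2 * m + 1) (2 * m + 1 + 1),
      (if k = 0 ∨ k = 2 * m + 1 then 0 else n + 2) = 0 := by
    rw [Nat.Ico_succ_singleton]; simp
  have hB : ∑ k ∈ Finset.Ico 1 (2 * m + 1),
      (if k = 0 ∨ k = 2 * m + 1 then 0 else n + 2) = 2 * m * (n + 2) := by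
    have hcongr : ∀ k ∈ Finset.Ico 1 (2 * m + 1),
        (if k = 0 ∨ k = 2 * m + 1 then 0 else n + 2) = n + 2 := by
      intro k hk; simp only [Finset.mem_Ico] at hk; rw [if_neg (by omega)]
    rw [Finset.sum_congr rfl hcongr, Finset.sum_const, Nat.card_Ico, smul_eq_mul]
    have h2 : 2 * m + 1 - 1 = 2 * m := by omega
    rw [h2]
  omega

end Stmt3Aux

open Stmt3Aux
/-- every reconfiguration sequence from `p_b` to `p_e` in `G_φ` has length at
least `2m(n+2)`; moreover, in any such sequence of length exactly `2m(n+2)`, every move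
(replacing a vertex `b` of the current path by a vertex `c`) increases either the level or
the c-state of the switched vertex by one, but not both. -/
theorem stmt3 (n m : ℕ) (hn : 1 ≤ n) (hm : 1 ≤ m) (φ : Fin m → Finset (Fin n × Bool))
    (ℓ : ℕ) (ρ : ℕ → (Fin (2 * m + 1 + 1) → PVert n m))
    (hρ : PReconfSeq n m φ ρ ℓ (pbP n m) (peP n m)) :
    2 * m * (n + 2) ≤ ℓ ∧
    (ℓ = 2 * m * (n + 2) →
      ∀ i < ℓ, ∀ pos : Fin (2 * m + 1 + 1), ρ i pos ≠ ρ (i + 1) pos →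
        ((ρ (i + 1) pos).level = (ρ i pos).level ∨
            (ρ (i + 1) pos).level = (ρ i pos).level + 1) ∧
        ((ρ (i + 1) pos).cstate = (ρ i pos).cstate ∨
            (ρ (i + 1) pos).cstate = (ρ i pos).cstate + 1) ∧
        (ρ (i + 1) pos).level + (ρ (i + 1) pos).cstate =
          (ρ i pos).level + (ρ i pos).cstate + 1) := by
  obtain ⟨h0, hE, hpath, hmv⟩ := hρ
  have hstep : ∀ i < ℓ, Phi (ρ (i + 1)) ≤ Phi (ρ i) + 1 ∧ Phi (ρ i) ≤ Phi (ρ (i + 1)) + 1 := by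
    intro i hi
    obtain ⟨pos, hne, hag⟩ := hmv i hi
    have hml := move_lemma hm (ρ i) (ρ (i + 1)) (hpath i hi.le) (hpath (i + 1) hi) pos hne hag
    have hex := phi_exchange (ρ i) (ρ (i + 1)) pos hag
    simp only [fval] at hex
    omega
  have hup : ∀ i ≤ ℓ, Phi (ρ i) ≤ Phi (ρ 0) + i := by
    intro i hi
    induction i with
    | zero => simp
    | succ k ih =>
      have h1 := hstep k (by omega)
      have h2 := ih (by omega)
      omega
  have hPhi0 : Phi (ρ 0) = 0 := by rw [h0]; exact phi_pbP
  have hPhiL : Phi (ρ ℓ) = 2 * m * (n + 2) := by rw [hE]; exact phi_peP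
  have hge : 2 * m * (n + 2) ≤ ℓ := by have := hup ℓ le_rfl; omega
  refine ⟨hge, ?_⟩
  intro hl i hi pos hne
  have hdown : ∀ k j, j + k ≤ ℓ → Phi (ρ (j + k)) ≤ Phi (ρ j) + k := by
    intro k
    induction k with
    | zero => intro j h; simp
    | succ k ih =>
      intro j h
      have h1 := hstep (j + k) (by omega)
      have h2 := ih j (by omega)
      have h3 : j + (k + 1) = (j + k) + 1 := by omega
      rw [h3]
      omega
  have hPi : ∀ t ≤ ℓ, Phi (ρ t) = t := by
    intro t ht
    have h1 := hup t ht
    have h2 := hdown (ℓ - t) t (by omega)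
    have h3 : t + (ℓ - t) = ℓ := by omega
    rw [h3] at h2
    omega
  obtain ⟨pos0, hne0, hag0⟩ := hmv i hi
  have hpp : pos = pos0 := by
    by_contra h
    exact hne (hag0 pos h)
  subst hpp
  have hml := move_lemma hm (ρ i) (ρ (i + 1)) (hpath i hi.le) (hpath (i + 1) hi) pos hne0 hag0
  have hex := phi_exchange (ρ i) (ρ (i + 1)) pos hag0
  simp only [fval] at hex
  have e1 := hPi i hi.le
  have e2 := hPi (i + 1) hi
  have hcs1 := cstate_le_one (ρ i pos)
  have hcs2 := cstate_le_one (ρ (i + 1) pos)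
  refine ⟨?_, ?_, ?_⟩ <;> omega
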